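/- arXiv:1703.06519 — 2 statements merged into one kernel-verified Lean document; each statement's English description precedes it below -/
import Mathlib

section
/- (Discrete nonlinear Gronwall inequality) Let D ≥ 0 and h > 0. Suppose {x_k}_{k≥0} is a sequence of real numbers satisfying |x_k| ≤ |x_{k−1}|(1 + D|x_{k−1}|² h) for all k ≥ 1. Define Φ(x) = ∫₁^x ds/(s + Ds³) for x > 0, which is strictly increasing, hence invertible on its range. Then for all k ≥ 0 (for which the right side is defined), |x_k| ≤ Φ^{−1}(Φ(|x₀|) + k h). -/
open Real MeasureTheory Set

theorem stmt6 (D h : ℝ) (hD : 0 ≤ D) (hh : 0 < h) (x : ℕ → ℝ)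
    (hx : ∀ k : ℕ, 1 ≤ k → |x k| ≤ |x (k - 1)| * (1 + D * |x (k - 1)|^2 * h))
    (hx0 : x 0 ≠ 0)
    (Φ : ℝ → ℝ) (hΦ : ∀ y : ℝ, Φ y = ∫ s in (1:ℝ)..y, 1 / (s + D * s^3)) :
    StrictMonoOn Φ (Set.Ioi 0) ∧
    ∀ (k : ℕ) (y : ℝ), 0 < y → Φ y = Φ |x 0| + k * h → |x k| ≤ y := by
  set f : ℝ → ℝ := fun s => 1 / (s + D * s^3) with hfdef
  have hden : ∀ s : ℝ, 0 < s → 0 < s + D * s^3 := by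
    intro s hs; positivity
  have hcont : ContinuousOn f (Ioi 0) := by
    apply ContinuousOn.div continuousOn_const
    · fun_prop
    · intro s hs; exact (hden s hs).ne'
  have hint : ∀ a b : ℝ, 0 < a → 0 < b → IntervalIntegrable f volume a b := by
    intro a b ha hb
    apply (hcont.mono ?_).intervalIntegrable
    intro s hs
    have h1 : min a b ≤ s := hs.1
    exact mem_Ioi.mpr (lt_of_lt_of_le (lt_min ha hb) h1)
  have hdiff : ∀ a b : ℝ, 0 < a → 0 < b → Φ b = Φ a + ∫ s in a..b, f s := by
    intro a b ha hb
    rw [hΦ, hΦ]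
    rw [intervalIntegral.integral_add_adjacent_intervals (hint 1 a one_pos ha)
      (hint a b ha hb)]
  have hmono : StrictMonoOn Φ (Set.Ioi 0) := by
    intro a ha b hb hab
    rw [hdiff a b (mem_Ioi.mp ha) (mem_Ioi.mp hb)]
    have hpos : 0 < ∫ s in a..b, f s := by
      apply intervalIntegral.intervalIntegral_pos_of_pos_on
        (hint a b (mem_Ioi.mp ha) (mem_Ioi.mp hb)) ?_ hab
      intro s hs
      exact one_div_pos.mpr (hden s (lt_trans (mem_Ioi.mp ha) hs.1))
    linarith
  have hstep : ∀ a : ℝ, 0 < a → Φ (a * (1 + D * a^2 * h)) ≤ Φ a + h := by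
    intro a ha
    set b := a * (1 + D * a^2 * h) with hbdef
    have hab : a ≤ b := by
      have h0 : 0 ≤ D * a^2 * h := by positivity
      nlinarith
    have hb : 0 < b := lt_of_lt_of_le ha hab
    rw [hdiff a b ha hb]
    have hda : 0 < a + D * a^3 := hden a ha
    have hbound : (∫ s in a..b, f s) ≤ ∫ _s in a..b, 1 / (a + D * a^3) := by
      apply intervalIntegral.integral_mono_on hab (hint a b ha hb)
        intervalIntegrable_const
      intro s hs
      have hsa : a ≤ s := hs.1
      apply one_div_le_one_div_of_le hda
      have h3 : a^3 ≤ s^3 := pow_le_pow_left₀ ha.le hsa 3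
      nlinarith
    rw [intervalIntegral.integral_const, smul_eq_mul] at hbound
    have hba : b - a = D * a^3 * h := by rw [hbdef]; ring
    have hle : (b - a) * (1 / (a + D * a^3)) ≤ h := by
      rw [hba, mul_one_div, div_le_iff₀ hda]
      nlinarith
    linarith
  have hR : ∀ k : ℕ, |x k| ≠ 0 → Φ |x k| ≤ Φ |x 0| + k * h := by
    intro k
    induction k with
    | zero => intro _; simp
    | succ k ih =>
      intro hne
      have hrec := hx (k + 1) (by omega)
      simp only [Nat.add_sub_cancel] at hrec
      have hxk : |x k| ≠ 0 := by
        intro h0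
        rw [h0] at hrec
        simp at hrec
        have : 0 < |x (k + 1)| := lt_of_le_of_ne (abs_nonneg _) (Ne.symm hne)
        simp [hrec] at this
      have ha : 0 < |x k| := lt_of_le_of_ne (abs_nonneg _) (Ne.symm hxk)
      have h1 : 0 < |x (k + 1)| := lt_of_le_of_ne (abs_nonneg _) (Ne.symm hne)
      have hbpos : 0 < |x k| * (1 + D * |x k|^2 * h) := by positivity
      have hm : Φ |x (k + 1)| ≤ Φ (|x k| * (1 + D * |x k|^2 * h)) :=
        hmono.monotoneOn (mem_Ioi.mpr h1) (mem_Ioi.mpr hbpos) hrec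
      have hs := hstep (|x k|) ha
      have hih := ih hxk
      push_cast
      push_cast at hih
      linarith
  refine ⟨hmono, ?_⟩
  intro k y hy hΦy
  by_cases hxk : |x k| = 0
  · rw [hxk]; exact hy.le
  · have h1 := hR k hxk
    rw [← hΦy] at h1
    have hpos : 0 < |x k| := lt_of_le_of_ne (abs_nonneg _) (Ne.symm hxk)
    by_contra hlt
    push_neg at hlt
    exact absurd (hmono (mem_Ioi.mpr hy) (mem_Ioi.mpr hpos) hlt) (not_lt.mpr h1)
end

section
/- For U^0(x,t) = (2/√π)∫₀^{r(x,t)/(2√t)} e^{−y²} dy with r the signed distance to the mean curvature flow M_t, one has (∂_t − Δ)U^0(x,t) = (H_{{r=r(x,t)}}(x) − H_{{r=0}}(Π(x)))·∂_r U^0(x,t), where H_{{r=c}} denotes the mean curvature of the level set at signed distance c from M_t and Π(x) is the nearest point projection onto M_t. In particular, the right-hand side equals (1/√(πt)) exp(−r²/(4t)) · r(x,t) · Σ_{i=1}^n κ_i²/(1 − r κ_i), where κ_i are the principal curvatures of M_t at Π(x). -/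
open Real MeasureTheory

lemma hasDerivAt_erfInt (z : ℝ) :
    HasDerivAt (fun w => ∫ u in (0:ℝ)..w, Real.exp (-u^2)) (Real.exp (-z^2)) z := by
  have hc : Continuous fun u : ℝ => Real.exp (-u^2) := by continuity
  exact intervalIntegral.integral_hasDerivAt_right (hc.intervalIntegrable _ _)
    (hc.stronglyMeasurableAtFilter _ _) hc.continuousAt

lemma hasDerivAt_phid (z : ℝ) :
    HasDerivAt (fun w => (2 / Real.sqrt π) * Real.exp (-w^2))
      ((2 / Real.sqrt π) * Real.exp (-z^2) * (-(2*z))) z := by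
  have h1 : HasDerivAt (fun w : ℝ => -w^2) (-(2*z)) z := by
    simpa using (hasDerivAt_pow 2 z).fun_neg
  have := (h1.exp).const_mul (2 / Real.sqrt π)
  refine this.congr_deriv ?_
  ring

lemma sum_sq_fderiv {m : ℕ} (g : EuclideanSpace ℝ (Fin m) → ℝ)
    (x : EuclideanSpace ℝ (Fin m)) :
    ∑ i, (fderiv ℝ g x (EuclideanSpace.single i 1))^2 = ‖gradient g x‖^2 := by
  have key : ∀ v, fderiv ℝ g x v = @inner ℝ _ _ (gradient g x) v := by
    intro v
    rw [gradient]
    exact (InnerProductSpace.toDual_symm_apply).symm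
  have hn : ‖gradient g x‖^2 = ∑ i, (gradient g x i)^2 := by
    rw [EuclideanSpace.norm_eq]
    rw [Real.sq_sqrt (by positivity)]
    simp [sq_abs]
  rw [hn]
  refine Finset.sum_congr rfl fun i _ => ?_
  rw [key, EuclideanSpace.inner_single_right]
  simp


/-- The Laplacian of a function on Euclidean space, as the sum of the second
partial derivatives along the coordinate directions. -/
noncomputable def lap {n : ℕ} (g : EuclideanSpace ℝ (Fin n) → ℝ)
    (x : EuclideanSpace ℝ (Fin n)) : ℝ :=
  ∑ i, fderiv ℝ (fun y => fderiv ℝ g y (EuclideanSpace.single i 1)) x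
    (EuclideanSpace.single i 1)

theorem stmt14 (n : ℕ)
    (r : EuclideanSpace ℝ (Fin (n + 1)) → ℝ → ℝ)
    (H H₀ : EuclideanSpace ℝ (Fin (n + 1)) → ℝ → ℝ)
    -- `κ i x t` : the `i`-th principal curvature of `M_t` at the projection `Π(x)` of `x`
    (κ : Fin n → EuclideanSpace ℝ (Fin (n + 1)) → ℝ → ℝ)
    (hr : ContDiff ℝ 2 (fun p : EuclideanSpace ℝ (Fin (n + 1)) × ℝ => r p.1 p.2))
    (heik : ∀ x t, ‖gradient (fun y => r y t) x‖ = 1)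
    (hκ : ∀ i x t, |r x t * κ i x t| < 1)
    -- mean curvature of the level set `{r = r(x,t)}` at `x`
    (hH : ∀ x t, H x t = ∑ i, κ i x t / (1 - r x t * κ i x t))
    -- mean curvature of `M_t = {r = 0}` at `Π(x)`
    (hH₀ : ∀ x t, H₀ x t = ∑ i, κ i x t)
    -- `M_t` evolves by mean curvature
    (hrt : ∀ x t, deriv (fun s => r x s) t = - H₀ x t)
    (hlap : ∀ x t, lap (fun y => r y t) x = - H x t)
    (x : EuclideanSpace ℝ (Fin (n + 1))) (t : ℝ) (ht : 0 < t)
    (U0 : EuclideanSpace ℝ (Fin (n + 1)) → ℝ → ℝ)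
    (hU0 : ∀ y s, U0 y s =
      (2 / Real.sqrt π) * ∫ u in (0:ℝ)..(r y s / (2 * Real.sqrt s)), Real.exp (-u^2)) :
    deriv (fun s => U0 x s) t - lap (fun y => U0 y t) x
      = (H x t - H₀ x t) * (1 / Real.sqrt (π * t) * Real.exp (-(r x t)^2 / (4 * t)))
    ∧ (H x t - H₀ x t) * (1 / Real.sqrt (π * t) * Real.exp (-(r x t)^2 / (4 * t)))
      = 1 / Real.sqrt (π * t) * Real.exp (-(r x t)^2 / (4 * t)) *
          (r x t * ∑ i, (κ i x t)^2 / (1 - r x t * κ i x t)) := by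
  have hπ : (0:ℝ) < Real.sqrt π := Real.sqrt_pos.mpr Real.pi_pos
  have hst : (0:ℝ) < Real.sqrt t := Real.sqrt_pos.mpr ht
  have hs2 : Real.sqrt t ^ 2 = t := Real.sq_sqrt ht.le
  set s : ℝ := Real.sqrt t with hsdef
  set R : ℝ := r x t with hRdef
  set z : ℝ := R / (2 * s) with hzdef
  set E : ℝ := Real.exp (-R^2 / (4 * t)) with hEdef
  have hEz : Real.exp (-z^2) = E := by
    rw [hEdef, hzdef]
    congr 1
    rw [div_pow, mul_pow, hs2]
    ring
  have hsqrtpit : Real.sqrt (π * t) = Real.sqrt π * s := Real.sqrt_mul Real.pi_pos.le t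
  -- the function g(y) = r(y,t)
  set g : EuclideanSpace ℝ (Fin (n+1)) → ℝ := fun y => r y t with hgdef
  have hg2 : ContDiff ℝ 2 g := hr.comp (contDiff_id.prodMk contDiff_const)
  -- the function f(s) = r(x,s)
  have hf2 : ContDiff ℝ 2 (fun u : ℝ => r x u) := hr.comp (contDiff_const.prodMk contDiff_id)
  -- time derivative of r
  have hfd : HasDerivAt (fun u : ℝ => r x u) (-H₀ x t) t := by
    have h := ((hf2.differentiable (by norm_num)).differentiableAt (x := t)).hasDerivAt
    rwa [hrt x t] at h
  -- derivative of denominator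
  have hden : HasDerivAt (fun u : ℝ => 2 * Real.sqrt u) (1 / s) t := by
    have h := (Real.hasDerivAt_sqrt ht.ne').const_mul 2
    refine h.congr_deriv ?_
    rw [hsdef]; field_simp
  have hdenne : 2 * Real.sqrt t ≠ 0 := by positivity
  have hζ : HasDerivAt (fun u : ℝ => r x u / (2 * Real.sqrt u))
      (((-H₀ x t) * (2 * s) - R * (1 / s)) / (2 * s)^2) t := by
    have := hfd.fun_div hden hdenne
    simpa [hsdef] using this
  have hEz2 : Real.exp (-(r x t / (2 * Real.sqrt t))^2) = E := by
    rw [← hEz, hzdef, hRdef, hsdef]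
  -- time derivative of U0
  have hderiv : deriv (fun u => U0 x u) t
      = (2 / Real.sqrt π) * E * (((-H₀ x t) * (2 * s) - R * (1 / s)) / (2 * s)^2) := by
    have heq : (fun u => U0 x u)
        = fun u => (2 / Real.sqrt π) * ∫ w in (0:ℝ)..(r x u / (2 * Real.sqrt u)),
            Real.exp (-w^2) := funext fun u => hU0 x u
    have h1 := (hasDerivAt_erfInt (r x t / (2 * Real.sqrt t))).const_mul (2 / Real.sqrt π)
    have hcomp := h1.comp t hζ
    simp only [Function.comp_def] at hcomp
    rw [heq, hcomp.deriv, hEz2]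
  -- spatial derivatives
  have hgd : ∀ y, DifferentiableAt ℝ g y :=
    fun y => (hg2.differentiable (by norm_num)).differentiableAt
  have hinner : ∀ y, HasFDerivAt (fun w => g w * (2 * s)⁻¹)
      ((2 * s)⁻¹ • fderiv ℝ g y) y := by
    intro y
    exact (hgd y).hasFDerivAt.mul_const ((2 * s)⁻¹)
  have hUy : ∀ y, HasFDerivAt (fun w => U0 w t)
      (((2 / Real.sqrt π) * Real.exp (-(g y * (2 * s)⁻¹)^2)) • ((2 * s)⁻¹ • fderiv ℝ g y)) y := by
    intro y
    have heq : (fun w => U0 w t)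
        = fun w => (2 / Real.sqrt π) * ∫ u in (0:ℝ)..(g w * (2 * s)⁻¹), Real.exp (-u^2) := by
      funext w
      rw [hU0 w t, div_eq_mul_inv (r w t) (2 * Real.sqrt t)]
    rw [heq]
    have h1 := (hasDerivAt_erfInt (g y * (2 * s)⁻¹)).const_mul (2 / Real.sqrt π)
    exact h1.comp_hasFDerivAt (f := fun w => g w * (2 * s)⁻¹) y (hinner y)
  -- fderiv of U0 in direction e i, as a function of y
  have hfd1 : ∀ i : Fin (n+1), (fun y => fderiv ℝ (fun w => U0 w t) y (EuclideanSpace.single i 1))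
      = fun y => ((2 / Real.sqrt π) * Real.exp (-(g y * (2 * s)⁻¹)^2) * (2 * s)⁻¹) *
          (fderiv ℝ g y (EuclideanSpace.single i 1)) := by
    intro i
    funext y
    rw [(hUy y).fderiv]
    simp [mul_assoc]
  -- differentiability of pieces
  set u : EuclideanSpace ℝ (Fin (n+1)) → ℝ :=
    fun y => (2 / Real.sqrt π) * Real.exp (-(g y * (2 * s)⁻¹)^2) * (2 * s)⁻¹ with hudef
  have hu : HasFDerivAt u
      ((((2 / Real.sqrt π) * Real.exp (-z^2) * (-(2*z))) * (2 * s)⁻¹ * (2 * s)⁻¹) • fderiv ℝ g x)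
      x := by
    have hz0 : g x * (2 * s)⁻¹ = z := by rw [hzdef, hRdef, hgdef, div_eq_mul_inv]
    have h2 : HasFDerivAt (fun y => (2 / Real.sqrt π) * Real.exp (-(g y * (2 * s)⁻¹)^2))
        (((2 / Real.sqrt π) * Real.exp (-z^2) * (-(2*z))) • ((2 * s)⁻¹ • fderiv ℝ g x)) x := by
      have h3 := (hasDerivAt_phid (g x * (2 * s)⁻¹)).comp_hasFDerivAt x (hinner x)
      rw [hz0] at h3
      exact h3
    have h4 := h2.mul_const ((2 * s)⁻¹)
    rw [hudef]
    have hsc : (((2 / Real.sqrt π) * Real.exp (-z^2) * (-(2*z))) * (2 * s)⁻¹ * (2 * s)⁻¹)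
          • fderiv ℝ g x
        = (2 * s)⁻¹ • (((2 / Real.sqrt π) * Real.exp (-z^2) * (-(2*z)))
            • ((2 * s)⁻¹ • fderiv ℝ g x)) := by
      rw [smul_smul, smul_smul]
      congr 1
      ring
    rw [hsc]
    exact h4
  have hDg : ContDiff ℝ 1 (fderiv ℝ g) := hg2.fderiv_right (by norm_num)
  have hv : ∀ i : Fin (n+1), DifferentiableAt ℝ
      (fun y => fderiv ℝ g y (EuclideanSpace.single i 1)) x :=
    fun i => ((hDg.differentiable one_ne_zero).differentiableAt).clm_apply (differentiableAt_const _)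
  -- compute the Laplacian of U0
  have hlapU : lap (fun y => U0 y t) x
      = u x * (- H x t)
        + (((2 / Real.sqrt π) * E * (-(2*z))) * (2 * s)⁻¹ * (2 * s)⁻¹) := by
    have hux : DifferentiableAt ℝ u x := hu.differentiableAt
    have step : ∀ i : Fin (n+1),
        fderiv ℝ (fun y => fderiv ℝ (fun w => U0 w t) y (EuclideanSpace.single i 1)) x
          (EuclideanSpace.single i 1)
        = u x * (fderiv ℝ (fun y => fderiv ℝ g y (EuclideanSpace.single i 1)) x
              (EuclideanSpace.single i 1))
          + (fderiv ℝ g x (EuclideanSpace.single i 1)) *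
              ((((2 / Real.sqrt π) * Real.exp (-z^2) * (-(2*z))) * (2 * s)⁻¹ * (2 * s)⁻¹)
                * (fderiv ℝ g x (EuclideanSpace.single i 1))) := by
      intro i
      rw [hfd1 i]
      have := fderiv_fun_mul (𝕜 := ℝ) hux (hv i)
      rw [hudef] at this ⊢
      rw [this]
      simp only [ContinuousLinearMap.add_apply, ContinuousLinearMap.smul_apply, smul_eq_mul]
      rw [hu.fderiv]
      simp only [ContinuousLinearMap.smul_apply, smul_eq_mul]
    rw [lap]
    rw [Finset.sum_congr rfl (fun i _ => step i)]
    rw [Finset.sum_add_distrib, ← Finset.mul_sum]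
    have hl : ∑ i, fderiv ℝ (fun y => fderiv ℝ g y (EuclideanSpace.single i 1)) x
        (EuclideanSpace.single i 1) = - H x t := by
      have := hlap x t
      rw [lap] at this
      exact this
    rw [hl]
    congr 1
    have hsum : ∑ i, (fderiv ℝ g x (EuclideanSpace.single i 1)) *
        ((((2 / Real.sqrt π) * Real.exp (-z^2) * (-(2*z))) * (2 * s)⁻¹ * (2 * s)⁻¹)
          * (fderiv ℝ g x (EuclideanSpace.single i 1)))
        = (((2 / Real.sqrt π) * Real.exp (-z^2) * (-(2*z))) * (2 * s)⁻¹ * (2 * s)⁻¹)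
          * ∑ i, (fderiv ℝ g x (EuclideanSpace.single i 1))^2 := by
      rw [Finset.mul_sum]
      exact Finset.sum_congr rfl fun i _ => by ring
    rw [hsum, sum_sq_fderiv g x, heik x t, hEz]
    ring
  have huxval : u x = (2 / Real.sqrt π) * E * (2 * s)⁻¹ := by
    simp only [hudef]
    have hz0 : g x * (2 * s)⁻¹ = z := by
      rw [hzdef, hRdef, hgdef, div_eq_mul_inv]
    rw [hz0, hEz]
  -- conclude
  have h1mκ : ∀ i : Fin n, (1 : ℝ) - r x t * κ i x t ≠ 0 := by
    intro i
    have := abs_lt.mp (hκ i x t)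
    intro h
    linarith [this.2]
  constructor
  · rw [hderiv, hlapU, huxval, hsqrtpit, hzdef]
    have hsne : s ≠ 0 := hst.ne'
    have hπne : Real.sqrt π ≠ 0 := hπ.ne'
    field_simp
    ring
  · have hdiff : H x t - H₀ x t = R * ∑ i, (κ i x t)^2 / (1 - R * κ i x t) := by
      rw [hH, hH₀, ← Finset.sum_sub_distrib, Finset.mul_sum, ← hRdef]
      refine Finset.sum_congr rfl fun i _ => ?_
      have hne := h1mκ i
      rw [← hRdef] at hne
      rw [div_sub' hne]
      ring
    rw [hdiff]
    ring
end
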